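/- For every integer n > 2, the number of permutations γ of Fin n with γ(0) = 0 such that for every i ≠ 0 at least one of i - γ(i) and i + γ(i) lies in {0, ..., n-1} (equivalently, γ(i) ≤ i or γ(i) < n - i for all i) equals ⌊(n-1)/2⌋! · ⌈(n-1)/2⌉!. -/

import Mathlib

open Finset

lemma count_nested {α : Type*} [DecidableEq α] [Fintype α] :
    ∀ (N : ℕ) (B : Fin N → Finset α), (∀ j k : Fin N, j ≤ k → B j ⊆ B k) →
    (Finset.univ.filter fun f : Fin N → α =>
        Function.Injective f ∧ ∀ j, f j ∈ B j).card
      = ∏ j : Fin N, ((B j).card - (j : ℕ)) := by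
  intro N
  induction N with
  | zero =>
    intro B _
    rw [Finset.filter_true_of_mem (fun f _ => ⟨fun a => a.elim0, fun j => j.elim0⟩)]
    simp
  | succ N IH =>
    intro B hB
    set S := (Finset.univ.filter fun f : Fin (N+1) → α =>
        Function.Injective f ∧ ∀ j, f j ∈ B j) with hS
    have h1 : S.card = ∑ p ∈ B 0, (S.filter fun f => f 0 = p).card := by
      apply Finset.card_eq_sum_card_fiberwise
      intro f hf
      exact ((Finset.mem_filter.mp hf).2).2 0
    have h2 : ∀ p ∈ B 0, (S.filter fun f => f 0 = p).card
        = ∏ j : Fin N, ((B j.succ \ {p}).card - (j : ℕ)) := by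
      intro p hp
      rw [← IH (fun j => B j.succ \ {p})
        (fun j k hjk => Finset.sdiff_subset_sdiff (hB _ _ (by simpa using hjk)) le_rfl)]
      apply Finset.card_nbij' (fun f => fun j => f j.succ) (fun g => Fin.cons p g)
      · intro f hf
        simp only [hS, Finset.mem_coe, Finset.mem_filter, Finset.mem_univ, true_and] at hf ⊢
        obtain ⟨⟨hinj, hmem⟩, h0⟩ := hf
        refine ⟨fun a b hab => Fin.succ_injective _ (hinj hab), fun j => ?_⟩
        rw [Finset.mem_sdiff]
        refine ⟨hmem j.succ, ?_⟩
        simp only [Finset.mem_singleton]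
        intro h
        exact absurd (hinj (h.trans h0.symm)) (Fin.succ_ne_zero j)
      · intro g hg
        simp only [Finset.mem_coe, Finset.mem_filter, Finset.mem_univ, true_and] at hg
        obtain ⟨hinj, hmem⟩ := hg
        simp only [hS, Finset.mem_coe, Finset.mem_filter, Finset.mem_univ, true_and]
        refine ⟨⟨?_, ?_⟩, by simp⟩
        · refine Fin.cons_injective_of_injective ?_ hinj
          rintro ⟨j, hj⟩
          exact (Finset.mem_sdiff.mp (hmem j)).2 (by simp [hj])
        · intro j
          rcases Fin.eq_zero_or_eq_succ j with rfl | ⟨j', rfl⟩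
          · simpa using hp
          · simp only [Fin.cons_succ]
            exact (Finset.mem_sdiff.mp (hmem j')).1
      · intro f hf
        funext j
        rcases Fin.eq_zero_or_eq_succ j with rfl | ⟨j', rfl⟩
        · simp [(Finset.mem_filter.mp hf).2]
        · simp
      · intro g hg
        funext j
        simp
    have h3 : ∀ p ∈ B 0, ∀ j : Fin N, (B j.succ \ {p}).card - (j : ℕ)
        = (B j.succ).card - ((j : ℕ) + 1) := by
      intro p hp j
      have hsub : ({p} : Finset α) ⊆ B j.succ :=
        Finset.singleton_subset_iff.mpr (hB 0 j.succ (Fin.zero_le _) hp)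
      rw [Finset.card_sdiff_of_subset hsub, Finset.card_singleton, Nat.sub_sub, Nat.add_comm 1]
    calc S.card = ∑ p ∈ B 0, ∏ j : Fin N, ((B j.succ).card - ((j : ℕ) + 1)) := by
          rw [h1]; exact Finset.sum_congr rfl fun p hp => by
            rw [h2 p hp]; exact Finset.prod_congr rfl fun j _ => h3 p hp j
      _ = (B 0).card * ∏ j : Fin N, ((B j.succ).card - ((j : ℕ) + 1)) := by
          rw [Finset.sum_const, smul_eq_mul]
      _ = ∏ j : Fin (N+1), ((B j).card - (j : ℕ)) := by
          rw [Fin.prod_univ_succ]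
          simp

lemma prod_min (N : ℕ) :
    ∏ j ∈ Finset.range N, min (j + 1) (N - j)
      = Nat.factorial (N / 2) * Nat.factorial (N - N / 2) := by
  have hc : N / 2 ≤ N := Nat.div_le_self _ _
  rw [Finset.range_eq_Ico, ← Finset.prod_Ico_consecutive _ (Nat.zero_le (N / 2)) hc]
  have h1 : ∏ j ∈ Finset.Ico 0 (N / 2), min (j + 1) (N - j)
      = Nat.factorial (N / 2) := by
    rw [← Finset.range_eq_Ico, ← Finset.prod_range_add_one_eq_factorial]
    exact Finset.prod_congr rfl fun j hj => by
      have := Finset.mem_range.mp hj; omega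
  have h2 : ∏ j ∈ Finset.Ico (N / 2) N, min (j + 1) (N - j)
      = Nat.factorial (N - N / 2) := by
    have e1 : ∏ j ∈ Finset.Ico (N / 2) N, min (j + 1) (N - j)
        = ∏ j ∈ Finset.Ico (N / 2) N, (N - j) := by
      exact Finset.prod_congr rfl fun j hj => by
        have := Finset.mem_Ico.mp hj; omega
    rw [e1, Finset.prod_Ico_eq_prod_range]
    have e2 : ∀ M : ℕ, ∏ j ∈ Finset.range M, (M - j) = Nat.factorial M := by
      intro M
      rw [← Finset.prod_range_add_one_eq_factorial,
        ← Finset.prod_range_reflect (fun j => j + 1) M]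
      exact Finset.prod_congr rfl fun j hj => by
        have := Finset.mem_range.mp hj; omega
    rw [← e2 (N - N / 2)]
    exact Finset.prod_congr rfl fun j hj => by
      have := Finset.mem_range.mp hj; omega
  rw [h1, h2]

/-- the number of permutations `γ` of `Fin n` fixing `0` such that for all
`i ≠ 0` at least one of `i - γ i`, `i + γ i` lies in `{0, …, n-1}` equals
`⌊(n-1)/2⌋! * ⌈(n-1)/2⌉!`. -/
theorem stmt_2 (n : ℕ) (hn : 2 < n) :
    (Finset.univ.filter (fun γ : Equiv.Perm (Fin n) =>
        γ ⟨0, by omega⟩ = ⟨0, by omega⟩ ∧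
        ∀ i : Fin n, i ≠ ⟨0, by omega⟩ →
          ((0 ≤ (i : ℤ) - (γ i : ℤ) ∧ (i : ℤ) - (γ i : ℤ) < n) ∨
           (0 ≤ (i : ℤ) + (γ i : ℤ) ∧ (i : ℤ) + (γ i : ℤ) < n)))).card =
      Nat.factorial ((n - 1) / 2) * Nat.factorial (n / 2) := by
  classical
  -- the allowed-position sets
  set B : Fin (n-1) → Finset (Fin n) := fun j =>
    Finset.univ.filter (fun i : Fin n =>
      (1 ≤ (i:ℕ) ∧ (i:ℕ) ≤ (j:ℕ)) ∨ (n - 1 - (j:ℕ) ≤ (i:ℕ))) with hBdef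
  have hBmem : ∀ (j : Fin (n-1)) (i : Fin n),
      i ∈ B j ↔ ((1 ≤ (i:ℕ) ∧ (i:ℕ) ≤ (j:ℕ)) ∨ (n - 1 - (j:ℕ) ≤ (i:ℕ))) := by
    intro j i; simp [hBdef]
  have hBmono : ∀ j k : Fin (n-1), j ≤ k → B j ⊆ B k := by
    intro j k hjk i hi
    rw [hBmem] at hi ⊢
    have hjk' : (j:ℕ) ≤ (k:ℕ) := hjk
    omega
  -- a useful consequence of membership in B j
  have hBpos : ∀ (j : Fin (n-1)) (i : Fin n), i ∈ B j → 1 ≤ (i:ℕ) := by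
    intro j i hi
    rw [hBmem] at hi
    have := j.2
    omega
  -- step 1: bijection with nested injections
  refine Eq.trans (Finset.card_bij
    (t := Finset.univ.filter fun f : Fin (n-1) → Fin n =>
        Function.Injective f ∧ ∀ j, f j ∈ B j)
    (fun γ _ => fun j : Fin (n-1) =>
        γ.symm ⟨n - 1 - (j:ℕ), by omega⟩) ?_ ?_ ?_) ?_
  · -- maps into t
    intro γ hγ
    obtain ⟨-, h0, hc⟩ := Finset.mem_filter.mp hγ
    have hle : ∀ i : Fin n, (i:ℕ) ≠ 0 →
        ((γ i : ℕ) ≤ (i:ℕ) ∨ (i:ℕ) + (γ i : ℕ) < n) := by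
      intro i hi
      have := hc i (fun h => hi (by rw [h]))
      omega
    rw [Finset.mem_filter]
    refine ⟨Finset.mem_univ _, ?_, ?_⟩
    · intro a b hab
      have := γ.symm.injective hab
      have : n - 1 - (a:ℕ) = n - 1 - (b:ℕ) := congrArg Fin.val this
      have ha := a.2; have hb := b.2
      exact Fin.ext (by omega)
    · intro j
      have hj := j.2
      have key : ∀ x : Fin n, γ x = ⟨n - 1 - (j:ℕ), by omega⟩ → x ∈ B j := by
        intro x hx
        have hx0 : (x:ℕ) ≠ 0 := by
          intro h
          have hz : (⟨0, by omega⟩ : Fin n) = (⟨n - 1 - (j:ℕ), by omega⟩ : Fin n) :=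
            h0.symm.trans ((congrArg γ (Fin.ext (b := ⟨0, by omega⟩) h)).symm.trans hx)
          have := congrArg Fin.val hz
          simp only [Fin.val_mk] at this
          omega
        have h2 : (γ x : ℕ) = n - 1 - (j:ℕ) := by rw [hx]
        rw [hBmem]
        have hxn := x.2
        rcases hle x hx0 with h | h <;> omega
      exact key _ (γ.apply_symm_apply _)
  · -- injective
    intro γ hγ γ' hγ' hff
    obtain ⟨-, h0, -⟩ := Finset.mem_filter.mp hγ
    obtain ⟨-, h0', -⟩ := Finset.mem_filter.mp hγ'
    have hsymm : γ.symm = γ'.symm := by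
      refine Equiv.ext fun x => ?_
      rcases Nat.eq_zero_or_pos (x:ℕ) with hx | hx
      · have hx' : x = (⟨0, by omega⟩ : Fin n) := Fin.ext hx
        rw [hx']
        have e1 : γ.symm (⟨0, by omega⟩ : Fin n) = ⟨0, by omega⟩ := by
          rw [Equiv.symm_apply_eq]; exact h0.symm
        have e2 : γ'.symm (⟨0, by omega⟩ : Fin n) = ⟨0, by omega⟩ := by
          rw [Equiv.symm_apply_eq]; exact h0'.symm
        exact e1.trans e2.symm
      · have hxlt := x.2
        have hj : n - 1 - (n - 1 - (x:ℕ)) = (x:ℕ) := by omega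
        have := congrFun hff ⟨n - 1 - (x:ℕ), by omega⟩
        simp only at this
        have hx2 : (⟨n - 1 - (n - 1 - (x:ℕ)), by omega⟩ : Fin n) = x := Fin.ext hj
        rw [hx2] at this
        exact this
    have : γ.symm.symm = γ'.symm.symm := by rw [hsymm]
    simpa using this
  · -- surjective
    intro f hf
    obtain ⟨-, hinj, hmem⟩ := Finset.mem_filter.mp hf
    have hf1 : ∀ j, 1 ≤ (f j : ℕ) := fun j => hBpos j (f j) (hmem j)
    set g : Fin n → Fin n := fun v =>
      if h : (v:ℕ) = 0 then ⟨0, by omega⟩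
      else f ⟨n - 1 - (v:ℕ), by have := v.2; omega⟩ with hgdef
    have hg0 : g ⟨0, by omega⟩ = ⟨0, by omega⟩ := by simp [hgdef]
    have hgpos : ∀ (v : Fin n) (hv : (v:ℕ) ≠ 0),
        g v = f ⟨n - 1 - (v:ℕ), by have := v.2; omega⟩ := by
      intro v hv; simp [hgdef, hv]
    have hginj : Function.Injective g := by
      intro a b hab
      by_cases ha : (a:ℕ) = 0 <;> by_cases hb : (b:ℕ) = 0
      · exact Fin.ext (by omega)
      · rw [hgpos b hb, show a = ⟨0, by omega⟩ from Fin.ext ha, hg0] at hab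
        have := hf1 ⟨n - 1 - (b:ℕ), by have := b.2; omega⟩
        rw [← hab] at this
        simp at this
      · rw [hgpos a ha, show b = ⟨0, by omega⟩ from Fin.ext hb, hg0] at hab
        have := hf1 ⟨n - 1 - (a:ℕ), by have := a.2; omega⟩
        rw [hab] at this
        simp at this
      · rw [hgpos a ha, hgpos b hb] at hab
        have := congrArg Fin.val (hinj hab)
        simp only at this
        have ha2 := a.2; have hb2 := b.2
        exact Fin.ext (by omega)
    set e := Equiv.ofBijective g (Finite.injective_iff_bijective.mp hginj) with hedef
    have he : ∀ v, e v = g v := fun v => rfl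
    refine ⟨e.symm, ?_, ?_⟩
    · -- e.symm is in s
      rw [Finset.mem_filter]
      refine ⟨Finset.mem_univ _, ?_, ?_⟩
      · rw [Equiv.symm_apply_eq, he, hg0]
      · intro i hi
        set v := e.symm i with hvdef
        have hgv : g v = i := by rw [← he, Equiv.apply_symm_apply]
        have hv0 : (v:ℕ) ≠ 0 := by
          intro h
          apply hi
          rw [← hgv, show v = ⟨0, by omega⟩ from Fin.ext h, hg0]
        rw [hgpos v hv0] at hgv
        have hmv := hmem ⟨n - 1 - (v:ℕ), by have := v.2; omega⟩
        rw [hBmem, hgv] at hmv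
        simp only at hmv
        have hv2 := v.2
        have hi2 := i.2
        have : (v:ℕ) ≤ (i:ℕ) ∨ (v:ℕ) + (i:ℕ) ≤ n - 1 := by omega
        rcases this with h | h
        · left
          constructor <;> [skip; skip] <;> push_cast <;> omega
        · right
          constructor <;> push_cast <;> omega
    · -- forward of e.symm is f
      funext j
      have hj := j.2
      show (e.symm).symm ⟨n - 1 - (j:ℕ), _⟩ = f j
      rw [Equiv.symm_symm, he, hgpos _ (by simp; omega)]
      congr 1
      exact Fin.ext (by simp; omega)
  · -- step 2: count the nested injections and compute
    rw [count_nested (n-1) B hBmono]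
    have hBcard : ∀ j : Fin (n-1), (B j).card = min (2*(j:ℕ)+1) (n-1) := by
      intro j
      have hj := j.2
      have hcard : (B j).card = ((Finset.range n).filter
          (fun i => (1 ≤ i ∧ i ≤ (j:ℕ)) ∨ (n - 1 - (j:ℕ) ≤ i))).card := by
        rw [hBdef]
        rw [Finset.card_filter, Finset.card_filter]
        exact Fin.sum_univ_eq_sum_range
          (fun i => if (1 ≤ i ∧ i ≤ (j:ℕ)) ∨ (n - 1 - (j:ℕ) ≤ i) then 1 else 0) n
      rw [hcard]
      by_cases hcase : 2*(j:ℕ)+1 ≤ n-1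
      · have hset : (Finset.range n).filter
            (fun i => (1 ≤ i ∧ i ≤ (j:ℕ)) ∨ (n - 1 - (j:ℕ) ≤ i))
            = Finset.Icc 1 (j:ℕ) ∪ Finset.Icc (n-1-(j:ℕ)) (n-1) := by
          ext x
          simp only [Finset.mem_filter, Finset.mem_range, Finset.mem_union, Finset.mem_Icc]
          omega
        rw [hset, Finset.card_union_of_disjoint, Nat.card_Icc, Nat.card_Icc]
        · omega
        · rw [Finset.disjoint_left]
          intro x hx hx'
          simp only [Finset.mem_Icc] at hx hx'
          omega
      · have hset : (Finset.range n).filter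
            (fun i => (1 ≤ i ∧ i ≤ (j:ℕ)) ∨ (n - 1 - (j:ℕ) ≤ i))
            = Finset.Icc 1 (n-1) := by
          ext x
          simp only [Finset.mem_filter, Finset.mem_range, Finset.mem_Icc]
          omega
        rw [hset, Nat.card_Icc]
        omega
    calc ∏ j : Fin (n-1), ((B j).card - (j:ℕ))
        = ∏ j : Fin (n-1), (min (2*(j:ℕ)+1) (n-1) - (j:ℕ)) := by
          exact Finset.prod_congr rfl fun j _ => by rw [hBcard]
      _ = ∏ j ∈ Finset.range (n-1), (min (2*j+1) (n-1) - j) :=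
          Fin.prod_univ_eq_prod_range (fun j => min (2*j+1) (n-1) - j) (n-1)
      _ = ∏ j ∈ Finset.range (n-1), min (j+1) ((n-1) - j) := by
          refine Finset.prod_congr rfl fun j hj => ?_
          have := Finset.mem_range.mp hj
          omega
      _ = Nat.factorial ((n-1) / 2) * Nat.factorial ((n-1) - (n-1)/2) := prod_min (n-1)
      _ = Nat.factorial ((n-1) / 2) * Nat.factorial (n / 2) := by
          rw [show (n-1) - (n-1)/2 = n/2 from by omega]
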